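/- For every odd positive integer k, if real polynomials h_1, …, h_r in one variable t satisfy (t^2 - 1)^{2k} = Σ_{i=1}^r h_i(t)^2 identically, then each h_i is a polynomial multiple of (t^2 - 1)^k. -/
import Mathlib

open Polynomial

lemma sos_aux (a : ℝ) : ∀ (n : ℕ) (r : ℕ) (h : Fin r → Polynomial ℝ),
    (X - C a) ^ (2 * n) ∣ ∑ i, (h i) ^ 2 → ∀ i, (X - C a) ^ n ∣ h i := by
  intro n
  induction n with
  | zero => intro r h _ i; simp
  | succ m ih =>
    intro r h hdvd i
    have hX : (X - C a : Polynomial ℝ) ∣ ∑ i, (h i) ^ 2 := by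
      refine dvd_trans ?_ hdvd
      exact dvd_pow_self _ (by omega)
    have hroot : ∀ j, (h j).eval a = 0 := by
      have h0 : ∑ j, ((h j).eval a) ^ 2 = 0 := by
        have := (Polynomial.dvd_iff_isRoot).mp hX
        simpa [Polynomial.IsRoot, Polynomial.eval_finset_sum] using this
      intro j
      have := (Finset.sum_eq_zero_iff_of_nonneg (fun j _ => sq_nonneg ((h j).eval a))).mp h0 j (Finset.mem_univ j)
      exact pow_eq_zero_iff (n := 2) (by norm_num) |>.mp this
    have hdvdh : ∀ j, (X - C a) ∣ h j := fun j =>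
      (Polynomial.dvd_iff_isRoot).mpr (hroot j)
    choose g hg using hdvdh
    have hsum : ∑ j, (h j) ^ 2 = (X - C a) ^ 2 * ∑ j, (g j) ^ 2 := by
      rw [Finset.mul_sum]
      refine Finset.sum_congr rfl fun j _ => ?_
      rw [hg j]; ring
    have hne : (X - C a : Polynomial ℝ) ^ 2 ≠ 0 := pow_ne_zero _ (X_sub_C_ne_zero a)
    have hdvd' : (X - C a) ^ (2 * m) ∣ ∑ j, (g j) ^ 2 := by
      have : (X - C a) ^ 2 * (X - C a) ^ (2 * m) ∣ (X - C a) ^ 2 * ∑ j, (g j) ^ 2 := by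
        rw [← hsum, ← pow_add]
        have : 2 + 2 * m = 2 * (m + 1) := by ring
        rw [this]; exact hdvd
      exact (mul_dvd_mul_iff_left hne).mp this
    have := ih r g hdvd' i
    rw [hg i, pow_succ, mul_comm ((X - C a) ^ m)]
    exact mul_dvd_mul_left _ this

theorem sos_decomposition_of_power_divisible (k : ℕ) (hk : Odd k) (hk1 : 1 ≤ k)
    (r : ℕ) (h : Fin r → Polynomial ℝ)
    (heq : ((Polynomial.X ^ 2 - 1 : Polynomial ℝ)) ^ (2 * k) = ∑ i, (h i) ^ 2) :
    ∀ i, ((Polynomial.X ^ 2 - 1 : Polynomial ℝ)) ^ k ∣ h i := by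
  intro i
  have hfact : (X ^ 2 - 1 : Polynomial ℝ) = (X - C 1) * (X - C (-1)) := by
    simp only [map_one, map_neg, sub_neg_eq_add]
    ring
  have hd1 : (X - C (1:ℝ)) ^ (2 * k) ∣ ∑ j, (h j) ^ 2 := by
    rw [← heq, hfact, mul_pow]; exact Dvd.intro _ rfl
  have hd2 : (X - C (-1:ℝ)) ^ (2 * k) ∣ ∑ j, (h j) ^ 2 := by
    rw [← heq, hfact, mul_pow]; exact Dvd.intro_left _ rfl
  have h1 := sos_aux 1 k r h hd1 i
  have h2 := sos_aux (-1) k r h hd2 i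
  have hcop : IsCoprime ((X - C (1:ℝ)) ^ k) ((X - C (-1:ℝ)) ^ k) := by
    refine IsCoprime.pow ?_
    exact Polynomial.isCoprime_X_sub_C_of_isUnit_sub (by norm_num)
  rw [hfact, mul_pow]
  exact hcop.mul_dvd h1 h2
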